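/- Let (M,μ) and (N,ν) be σ-finite measure spaces and let K : M × [0,1] × N → ℂ be such that (p,q) ↦ K(p,t,q) is measurable for each t ∈ [0,1], the map t ↦ K(p,t,q) is differentiable with |∂K/∂t(p,t,q)| ≤ C for all (p,t,q), and there exist constants R, S such that μ({p ∈ M : K(p,t,q) ≠ 0 for some t ∈ [0,1]}) ≤ R for every q ∈ N and ν({q ∈ N : K(p,t,q) ≠ 0 for some t ∈ [0,1]}) ≤ S for every p ∈ M. For s ∈ [0,1] let A_s : L²(ν) → L²(μ) denote the integral operator with kernel K(·,s,·). Then for all s, s' ∈ [0,1] and every α ∈ L²(ν), ‖A_{s'}α − A_s α‖_{L²(μ)} ≤ √(S·R)·C·|s' − s|·‖α‖_{L²(ν)}; hence ‖A_{s'} − A_s‖ ≤ √(S·R)·C·|s' − s|, so s ↦ A_s is Lipschitz in operator norm. -/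

import Mathlib

open MeasureTheory

/-- For a kernel `K(p,t,q)` on `M × [0,1] × N`, measurable in `(p,q)` for each
`t`, with `|∂K/∂t| ≤ C` and supports of measure at most `R` (resp. `S`) in each variable,
the sliced integral operators `A_s` satisfy
`‖A_{s'} α − A_s α‖_{L²(μ)} ≤ √(S·R)·C·|s' − s|·‖α‖_{L²(ν)}`, so `s ↦ A_s` is Lipschitz in
operator norm. -/
theorem sliced_integral_operators_lipschitz
    {M N : Type*} [MeasurableSpace M] [MeasurableSpace N]
    (μ : Measure M) (ν : Measure N) [SigmaFinite μ] [SigmaFinite ν]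
    (K K' : M → ℝ → N → ℂ) (C R S : NNReal)
    (hmeas : ∀ t ∈ Set.Icc (0:ℝ) 1, Measurable fun pq : M × N => K pq.1 t pq.2)
    (hderiv : ∀ p q, ∀ t ∈ Set.Icc (0:ℝ) 1, HasDerivAt (fun s => K p s q) (K' p t q) t)
    (hC : ∀ p q, ∀ t ∈ Set.Icc (0:ℝ) 1, ‖K' p t q‖ ≤ C)
    (hR : ∀ q, μ {p | ∃ t ∈ Set.Icc (0:ℝ) 1, K p t q ≠ 0} ≤ (R : ENNReal))
    (hS : ∀ p, ν {q | ∃ t ∈ Set.Icc (0:ℝ) 1, K p t q ≠ 0} ≤ (S : ENNReal)) :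
    ∀ s ∈ Set.Icc (0:ℝ) 1, ∀ s' ∈ Set.Icc (0:ℝ) 1, ∀ α : N → ℂ, MemLp α 2 ν →
      eLpNorm (fun p => (∫ q, K p s' q * α q ∂ν) - ∫ q, K p s q * α q ∂ν) 2 μ
        ≤ ENNReal.ofReal (Real.sqrt ((S : ℝ) * (R : ℝ)) * (C : ℝ) * |s' - s|)
            * eLpNorm α 2 ν := by
  intro s hs s' hs' α hα
  obtain ⟨β, hβm, hαβ⟩ := hα.aestronglyMeasurable
  have hβmeas : Measurable β := hβm.measurable
  have hβ2 : MemLp β 2 ν := hα.ae_eq hαβ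
  -- replace α by the measurable representative β
  have hcongr : ∀ p t, (∫ q, K p t q * α q ∂ν) = ∫ q, K p t q * β q ∂ν := fun p t =>
    integral_congr_ae (hαβ.mono fun q h => by simp only [h])
  have hfun : (fun p => (∫ q, K p s' q * α q ∂ν) - ∫ q, K p s q * α q ∂ν)
      = fun p => (∫ q, K p s' q * β q ∂ν) - ∫ q, K p s q * β q ∂ν :=
    funext fun p => by rw [hcongr p s', hcongr p s]
  rw [hfun, eLpNorm_congr_ae hαβ]
  -- the difference kernel
  set g : M → N → ℂ := fun p q => K p s' q - K p s q with hgdef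
  have hgmeas : Measurable (fun x : M × N => g x.1 x.2) := (hmeas s' hs').sub (hmeas s hs)
  have hgp : ∀ p, Measurable (g p) := fun p => hgmeas.comp measurable_prodMk_left
  have hgq : ∀ q, Measurable (fun p => g p q) := fun q => hgmeas.comp measurable_prodMk_right
  have hgbnd : ∀ p q, ‖g p q‖ ≤ (C : ℝ) * |s' - s| := by
    intro p q
    have := (convex_Icc (0:ℝ) 1).norm_image_sub_le_of_norm_hasDerivWithin_le
      (f := fun t => K p t q) (f' := fun t => K' p t q)
      (fun t ht => (hderiv p q t ht).hasDerivWithinAt) (fun t ht => hC p q t ht) hs hs'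
    simpa [Real.norm_eq_abs] using this
  have hFS : ∀ p, ν {q | g p q ≠ 0} ≤ (S : ENNReal) := by
    intro p
    refine le_trans (measure_mono ?_) (hS p)
    intro q hq
    simp only [Set.mem_setOf_eq] at hq ⊢
    by_contra h
    push_neg at h
    exact hq (by simp [hgdef, h s' hs', h s hs])
  have hFR : ∀ q, μ {p | g p q ≠ 0} ≤ (R : ENNReal) := by
    intro q
    refine le_trans (measure_mono ?_) (hR q)
    intro p hp
    simp only [Set.mem_setOf_eq] at hp ⊢
    by_contra h
    push_neg at h
    exact hp (by simp [hgdef, h s' hs', h s hs])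
  set c : ENNReal := ENNReal.ofReal ((C : ℝ) * |s' - s|) with hcdef
  -- the auxiliary kernel φ
  set φ : M → N → ENNReal := fun p q => if g p q = 0 then 0 else (‖β q‖₊ : ENNReal) with hφdef
  have hφjm : Measurable (fun x : M × N => φ x.1 x.2) := by
    apply Measurable.ite (hgmeas (measurableSet_singleton 0)) measurable_const
    exact (measurable_coe_nnreal_ennreal.comp hβmeas.nnnorm).comp measurable_snd
  have hφp : ∀ p, Measurable (φ p) := fun p => hφjm.comp measurable_prodMk_left
  have hgφ : ∀ p q, (‖g p q‖₊ : ENNReal) * (‖β q‖₊ : ENNReal) ≤ c * φ p q := by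
    intro p q
    by_cases h : g p q = 0
    · simp [hφdef, h]
    · simp only [hφdef, if_neg h]
      refine mul_le_mul_left ?_ _
      rw [← ENNReal.ofReal_coe_nnreal, coe_nnnorm]
      exact ENNReal.ofReal_le_ofReal (hgbnd p q)
  -- integrability of the difference integrand
  have hIg : ∀ p, Integrable (fun q => g p q * β q) ν := by
    intro p
    have hFmeas : MeasurableSet {q | g p q ≠ 0} :=
      ((hgp p) (measurableSet_singleton 0)).compl
    haveI : IsFiniteMeasure (ν.restrict {q | g p q ≠ 0}) := by
      constructor
      rw [Measure.restrict_apply_univ]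
      exact lt_of_le_of_lt (hFS p) ENNReal.coe_lt_top
    have hind : Integrable ({q | g p q ≠ 0}.indicator β) ν := by
      rw [integrable_indicator_iff hFmeas]
      exact ((hβ2.restrict _).integrable one_le_two)
    refine Integrable.mono' (hind.norm.const_mul ((C : ℝ) * |s' - s|))
      ((hgp p).aestronglyMeasurable.mul hβm.aestronglyMeasurable) ?_
    refine Filter.Eventually.of_forall fun q => ?_
    by_cases h : g p q = 0
    · simp [h, Set.indicator_apply, Set.mem_setOf_eq, mul_nonneg (by positivity : (0:ℝ) ≤ (C:ℝ) * |s' - s|) (norm_nonneg _)]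
    · rw [Set.indicator_of_mem (by exact h)]
      rw [norm_mul]
      exact mul_le_mul_of_nonneg_right (hgbnd p q) (norm_nonneg _)
  -- pointwise bound on the norm of the difference of integrals
  have hptwise : ∀ p,
      (‖(∫ q, K p s' q * β q ∂ν) - ∫ q, K p s q * β q ∂ν‖₊ : ENNReal)
        ≤ ∫⁻ q, c * φ p q ∂ν := by
    intro p
    have hsplit : ∀ q, g p q * β q = K p s' q * β q - K p s q * β q := fun q => by
      simp [hgdef, sub_mul]
    by_cases hI : Integrable (fun q => K p s q * β q) ν
    · have hI' : Integrable (fun q => K p s' q * β q) ν := by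
        have := (hIg p).add hI
        refine this.congr (Filter.Eventually.of_forall fun q => ?_)
        simp only [Pi.add_apply]
        rw [hsplit q]; ring
      have heq : (∫ q, K p s' q * β q ∂ν) - ∫ q, K p s q * β q ∂ν
          = ∫ q, g p q * β q ∂ν := by
        rw [← integral_sub hI' hI]
        exact integral_congr_ae (Filter.Eventually.of_forall fun q => (hsplit q).symm)
      rw [heq]
      calc (‖∫ q, g p q * β q ∂ν‖₊ : ENNReal)
          ≤ ∫⁻ q, ‖g p q * β q‖₊ ∂ν := enorm_integral_le_lintegral_enorm _
        _ ≤ ∫⁻ q, c * φ p q ∂ν := by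
            refine lintegral_mono fun q => ?_
            rw [nnnorm_mul, ENNReal.coe_mul]
            exact hgφ p q
    · have hI' : ¬ Integrable (fun q => K p s' q * β q) ν := by
        intro h
        apply hI
        have := h.sub (hIg p)
        refine this.congr (Filter.Eventually.of_forall fun q => ?_)
        simp only [Pi.sub_apply]
        rw [hsplit q]; ring
      rw [integral_undef hI, integral_undef hI']
      simp
  -- Cauchy–Schwarz in q
  have hconj : Real.HolderConjugate 2 2 := Real.HolderConjugate.two_two
  have hCS : ∀ p, ∫⁻ q, φ p q ∂ν
      ≤ (S : ENNReal) ^ (1/2 : ℝ) * (∫⁻ q, φ p q ^ (2:ℝ) ∂ν) ^ (1/2 : ℝ) := by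
    intro p
    have hFmeas : MeasurableSet {q | g p q ≠ 0} :=
      ((hgp p) (measurableSet_singleton 0)).compl
    have h1 : ∀ q, φ p q = ({q | g p q ≠ 0}.indicator (1 : N → ENNReal) * φ p) q := by
      intro q
      by_cases h : g p q = 0 <;>
        simp [hφdef, h, Set.indicator_apply, Set.mem_setOf_eq]
    calc ∫⁻ q, φ p q ∂ν
        = ∫⁻ q, ({q | g p q ≠ 0}.indicator (1 : N → ENNReal) * φ p) q ∂ν :=
          lintegral_congr h1
      _ ≤ (∫⁻ q, ({q | g p q ≠ 0}.indicator (1 : N → ENNReal)) q ^ (2:ℝ) ∂ν) ^ (1/2 : ℝ)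
            * (∫⁻ q, φ p q ^ (2:ℝ) ∂ν) ^ (1/2 : ℝ) :=
          ENNReal.lintegral_mul_le_Lp_mul_Lq ν hconj
            ((measurable_one.indicator hFmeas).aemeasurable) ((hφp p).aemeasurable)
      _ ≤ (S : ENNReal) ^ (1/2 : ℝ) * (∫⁻ q, φ p q ^ (2:ℝ) ∂ν) ^ (1/2 : ℝ) := by
          refine mul_le_mul_left (ENNReal.rpow_le_rpow ?_ (by norm_num)) _
          have : ∀ q, ({q | g p q ≠ 0}.indicator (1 : N → ENNReal)) q ^ (2:ℝ)
              = ({q | g p q ≠ 0}.indicator (1 : N → ENNReal)) q := by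
            intro q
            by_cases h : q ∈ {q | g p q ≠ 0} <;>
              simp [Set.indicator_apply, h, ENNReal.rpow_two]
          rw [lintegral_congr this, lintegral_indicator_one hFmeas]
          exact hFS p
  -- squared pointwise bound
  have hfp2 : ∀ p,
      (‖(∫ q, K p s' q * β q ∂ν) - ∫ q, K p s q * β q ∂ν‖₊ : ENNReal) ^ (2:ℝ)
        ≤ c ^ (2:ℝ) * (S : ENNReal) * ∫⁻ q, φ p q ^ (2:ℝ) ∂ν := by
    intro p
    calc (‖(∫ q, K p s' q * β q ∂ν) - ∫ q, K p s q * β q ∂ν‖₊ : ENNReal) ^ (2:ℝ)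
        ≤ (∫⁻ q, c * φ p q ∂ν) ^ (2:ℝ) :=
          ENNReal.rpow_le_rpow (hptwise p) (by norm_num)
      _ = (c * ∫⁻ q, φ p q ∂ν) ^ (2:ℝ) := by rw [lintegral_const_mul c (hφp p)]
      _ ≤ (c * ((S : ENNReal) ^ (1/2 : ℝ) * (∫⁻ q, φ p q ^ (2:ℝ) ∂ν) ^ (1/2 : ℝ))) ^ (2:ℝ) :=
          ENNReal.rpow_le_rpow (mul_le_mul_right (hCS p) c) (by norm_num)
      _ = c ^ (2:ℝ) * (S : ENNReal) * ∫⁻ q, φ p q ^ (2:ℝ) ∂ν := by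
          rw [ENNReal.mul_rpow_of_nonneg _ _ (by norm_num : (0:ℝ) ≤ 2),
            ENNReal.mul_rpow_of_nonneg _ _ (by norm_num : (0:ℝ) ≤ 2),
            ← ENNReal.rpow_mul, ← ENNReal.rpow_mul]
          norm_num [mul_assoc]
  -- Tonelli and the μ-support bound
  have hφ2jm : Measurable (fun x : M × N => φ x.1 x.2 ^ (2:ℝ)) := by
    simp_rw [ENNReal.rpow_two]
    exact hφjm.pow_const 2
  have hswap : ∫⁻ p, ∫⁻ q, φ p q ^ (2:ℝ) ∂ν ∂μ = ∫⁻ q, ∫⁻ p, φ p q ^ (2:ℝ) ∂μ ∂ν :=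
    lintegral_lintegral_swap hφ2jm.aemeasurable
  have hinner : ∀ q, ∫⁻ p, φ p q ^ (2:ℝ) ∂μ
      ≤ (R : ENNReal) * (‖β q‖₊ : ENNReal) ^ (2:ℝ) := by
    intro q
    have hGmeas : MeasurableSet {p | g p q ≠ 0} :=
      ((hgq q) (measurableSet_singleton 0)).compl
    have h1 : ∀ p, φ p q ^ (2:ℝ)
        = {p | g p q ≠ 0}.indicator (fun _ => (‖β q‖₊ : ENNReal) ^ (2:ℝ)) p := by
      intro p
      by_cases h : g p q = 0 <;>
        simp [hφdef, h, Set.indicator_apply, Set.mem_setOf_eq, ENNReal.rpow_two]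
    rw [lintegral_congr h1, lintegral_indicator_const hGmeas, mul_comm]
    exact mul_le_mul_left (hFR q) _
  -- main integral bound
  have hA : ∫⁻ p, (‖(∫ q, K p s' q * β q ∂ν) - ∫ q, K p s q * β q ∂ν‖₊ : ENNReal) ^ (2:ℝ) ∂μ
      ≤ c ^ (2:ℝ) * (S : ENNReal) * ((R : ENNReal) * ∫⁻ q, (‖β q‖₊ : ENNReal) ^ (2:ℝ) ∂ν) := by
    have hXmeas : Measurable fun p => ∫⁻ q, φ p q ^ (2:ℝ) ∂ν :=
      Measurable.lintegral_prod_right hφ2jm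
    calc ∫⁻ p, (‖(∫ q, K p s' q * β q ∂ν) - ∫ q, K p s q * β q ∂ν‖₊ : ENNReal) ^ (2:ℝ) ∂μ
        ≤ ∫⁻ p, c ^ (2:ℝ) * (S : ENNReal) * ∫⁻ q, φ p q ^ (2:ℝ) ∂ν ∂μ :=
          lintegral_mono fun p => hfp2 p
      _ = c ^ (2:ℝ) * (S : ENNReal) * ∫⁻ p, ∫⁻ q, φ p q ^ (2:ℝ) ∂ν ∂μ :=
          lintegral_const_mul _ hXmeas
      _ = c ^ (2:ℝ) * (S : ENNReal) * ∫⁻ q, ∫⁻ p, φ p q ^ (2:ℝ) ∂μ ∂ν := by rw [hswap]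
      _ ≤ c ^ (2:ℝ) * (S : ENNReal) * ∫⁻ q, (R : ENNReal) * (‖β q‖₊ : ENNReal) ^ (2:ℝ) ∂ν :=
          mul_le_mul_right (lintegral_mono fun q => hinner q) _
      _ = c ^ (2:ℝ) * (S : ENNReal) * ((R : ENNReal) * ∫⁻ q, (‖β q‖₊ : ENNReal) ^ (2:ℝ) ∂ν) := by
          rw [lintegral_const_mul]
          · simp_rw [ENNReal.rpow_two]
            exact (measurable_coe_nnreal_ennreal.comp hβmeas.nnnorm).pow_const 2
  -- finish: take square roots
  rw [eLpNorm_eq_lintegral_rpow_enorm_toReal two_ne_zero ENNReal.ofNat_ne_top,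
    eLpNorm_eq_lintegral_rpow_enorm_toReal two_ne_zero ENNReal.ofNat_ne_top]
  simp only [ENNReal.toReal_ofNat]
  have hrhs : ENNReal.ofReal (Real.sqrt ((S : ℝ) * (R : ℝ)) * (C : ℝ) * |s' - s|)
      = (S : ENNReal) ^ (1/2 : ℝ) * (R : ENNReal) ^ (1/2 : ℝ) * c := by
    rw [mul_assoc, ENNReal.ofReal_mul (Real.sqrt_nonneg _)]
    congr 1
    rw [Real.sqrt_eq_rpow,
      ← ENNReal.ofReal_rpow_of_nonneg (mul_nonneg S.coe_nonneg R.coe_nonneg) (by norm_num),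
      ENNReal.ofReal_mul S.coe_nonneg, ENNReal.ofReal_coe_nnreal, ENNReal.ofReal_coe_nnreal,
      ENNReal.mul_rpow_of_nonneg _ _ (by norm_num : (0:ℝ) ≤ 1/2)]
  rw [hrhs]
  calc (∫⁻ p, (‖(∫ q, K p s' q * β q ∂ν) - ∫ q, K p s q * β q ∂ν‖₊ : ENNReal) ^ (2:ℝ) ∂μ)
        ^ (1/(2:ℝ))
      ≤ (c ^ (2:ℝ) * (S : ENNReal) * ((R : ENNReal) * ∫⁻ q, (‖β q‖₊ : ENNReal) ^ (2:ℝ) ∂ν))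
          ^ (1/(2:ℝ)) := ENNReal.rpow_le_rpow hA (by norm_num)
    _ = (S : ENNReal) ^ (1/2 : ℝ) * (R : ENNReal) ^ (1/2 : ℝ) * c
          * (∫⁻ q, (‖β q‖₊ : ENNReal) ^ (2:ℝ) ∂ν) ^ (1/(2:ℝ)) := by
        rw [ENNReal.mul_rpow_of_nonneg _ _ (by norm_num : (0:ℝ) ≤ 1/2),
          ENNReal.mul_rpow_of_nonneg _ _ (by norm_num : (0:ℝ) ≤ 1/2),
          ENNReal.mul_rpow_of_nonneg _ _ (by norm_num : (0:ℝ) ≤ 1/2),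
          ← ENNReal.rpow_mul]
        norm_num
        ring
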